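/- Let F_A* be an ordered set of n_A* feature points (pairs of a coordinate in ℝ² and a descriptor in ℝ^d) and F_B* an ordered set of n_B* feature points, with probability vectors p_A on {1,…,n_A*} and p_B on {1,…,n_B*} having strictly positive entries. Let (ι_k)_{k≥1} and (κ_l)_{l≥1} be independent i.i.d. sequences with laws p_A and p_B respectively, and for sample sizes n_A, n_B set F_A = (F*_{A,ι_1},…,F*_{A,ι_{n_A}}) and F_B = (F*_{B,κ_1},…,F*_{B,κ_{n_B}}). Let TF be any matching Transformer (a pointwise embedding layer followed by finitely many attention layers, each with its own parameters, continuous strictly positive similarity function, and continuous activation, each updating one token stream with keys/values taken from either stream), and let TF^{p_A,p_B} be its reweighted version. Denote by F'_{A,i} and F'_{B,j} the i-th and j-th output feature points of TF(F_A, F_B), and by F*'_{A,i*} and F*'_{B,j*} those of TF^{p_A,p_B}(F_A*, F_B*). Then for all fixed indices i, j ∈ ℕ+, as n_A, n_B → ∞ jointly, ‖F'_{A,i} − F*'_{A,ι_i}‖ → 0 and ‖F'_{B,j} − F*'_{B,κ_j}‖ → 0 in probability. -/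

import Mathlib

open MeasureTheory Filter Finset ProbabilityTheory

noncomputable section

/-- `X` converges to `Y` in probability (w.r.t. the measure `P`) along the filter `l`. -/
def TendstoInProb {Ω : Type*} [MeasurableSpace Ω] (P : Measure Ω)
    {ι : Type*} (l : Filter ι) {E : Type*} [Dist E]
    (X : ι → Ω → E) (Y : Ω → E) : Prop :=
  ∀ ε : ℝ, 0 < ε → Tendsto (fun n => P {ω | ε < dist (X n ω) (Y ω)}) l (nhds 0)

/-- An attention layer of a matching Transformer: its own number of heads, a continuous,
strictly positive similarity function, a continuous activation, head and feed-forward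
parameters, and design choices of which token stream it updates (`updatesA`) and from which
stream the keys/values are taken (`srcA`). -/
structure AttnLayer (d : ℕ) where
  H : ℕ
  delta : (Fin d → ℝ) → (Fin d → ℝ) → ℝ
  delta_cont : Continuous fun x : (Fin d → ℝ) × (Fin d → ℝ) => delta x.1 x.2
  delta_pos : ∀ x y, 0 < delta x y
  act : ℝ → ℝ
  act_cont : Continuous act
  WVO : Fin H → Matrix (Fin d) (Fin d) ℝ
  WK : Fin H → Matrix (Fin d) (Fin d) ℝ
  WQ : Fin H → Matrix (Fin d) (Fin d) ℝ
  W1 : Matrix (Fin d) (Fin d) ℝ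
  W2 : Matrix (Fin d) (Fin d) ℝ
  b1 : Fin d → ℝ
  b2 : Fin d → ℝ
  updatesA : Bool
  srcA : Bool

/-- The update of a single query token `q` by the (weighted) attention layer `L`, with keys
and values `XK i` (`i < nK`) carrying weights `w i`:
`Y = q + ∑_h W_VO^h XK Sim^w(W_K^h XK, W_Q^h q)` followed by the feed-forward part
`Y + W₂ Act(W₁ Y + b₁) + b₂`, where
`Sim^w_i = w i δ(W_K^h XK_i, W_Q^h q) / ∑_{k<nK} w k δ(W_K^h XK_k, W_Q^h q)`.
Taking `w ≡ 1` yields the ordinary attention update. -/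
def attnUpdate {d : ℕ} (L : AttnLayer d) (nK : ℕ) (w : ℕ → ℝ)
    (XK : ℕ → Fin d → ℝ) (q : Fin d → ℝ) : Fin d → ℝ :=
  let Y : Fin d → ℝ := q + ∑ h : Fin L.H, ∑ i ∈ Finset.range nK,
      ((w i * L.delta ((L.WK h).mulVec (XK i)) ((L.WQ h).mulVec q)) /
        ∑ k ∈ Finset.range nK, w k * L.delta ((L.WK h).mulVec (XK k)) ((L.WQ h).mulVec q)) •
        ((L.WVO h).mulVec (XK i))
  Y + (L.W2).mulVec (fun a => L.act (((L.W1).mulVec Y + L.b1) a)) + L.b2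

/-- Application of one attention layer to the pair of token streams `(X_A, X_B)` (each
modelled as a function `ℕ → Fin d → ℝ`, with `nA` resp. `nB` relevant tokens and with
weights `wA` resp. `wB`): the layer updates one stream, with keys/values taken from the
stream selected by `srcA`. -/
def applyLayer {d : ℕ} (L : AttnLayer d) (nA nB : ℕ) (wA wB : ℕ → ℝ)
    (X : (ℕ → Fin d → ℝ) × (ℕ → Fin d → ℝ)) : (ℕ → Fin d → ℝ) × (ℕ → Fin d → ℝ) :=
  let nK : ℕ := if L.srcA then nA else nB
  let w : ℕ → ℝ := if L.srcA then wA else wB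
  let XK : ℕ → Fin d → ℝ := if L.srcA then X.1 else X.2
  if L.updatesA then (fun j => attnUpdate L nK w XK (X.1 j), X.2)
  else (X.1, fun j => attnUpdate L nK w XK (X.2 j))

/-- A matching Transformer: a pointwise embedding layer mapping a feature point
(coordinate in ℝ², descriptor in ℝ^d) to a token, followed by finitely many attention
layers. -/
structure MatchingTF (d : ℕ) where
  emb : (Fin 2 → ℝ) → (Fin d → ℝ) → Fin d → ℝ
  layers : List (AttnLayer d)

/-- Running the (weighted) Transformer on the feature points `FA` (`i < nA` relevant) and
`FB` (`j < nB` relevant) with token weights `wA`, `wB`: embed each feature point, then apply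
the attention layers in order.  The result is the pair of output token streams.  Taking
`wA = wB ≡ 1` yields the ordinary Transformer `TF`; taking `wA = p_A`, `wB = p_B` yields the
reweighted Transformer `TF^{p_A,p_B}`. -/
def runTF {d : ℕ} (T : MatchingTF d) (nA nB : ℕ) (wA wB : ℕ → ℝ)
    (FA FB : ℕ → (Fin 2 → ℝ) × (Fin d → ℝ)) : (ℕ → Fin d → ℝ) × (ℕ → Fin d → ℝ) :=
  T.layers.foldl (fun X L => applyLayer L nA nB wA wB X)
    (fun i => T.emb (FA i).1 (FA i).2, fun j => T.emb (FB j).1 (FB j).2)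

/-! Auxiliary defs -/

def attnCore {d : ℕ} (L : AttnLayer d) (nK : ℕ) (w : ℕ → ℝ)
    (XK : ℕ → Fin d → ℝ) (q : Fin d → ℝ) : Fin d → ℝ :=
  q + ∑ h : Fin L.H, ∑ i ∈ Finset.range nK,
      ((w i * L.delta ((L.WK h).mulVec (XK i)) ((L.WQ h).mulVec q)) /
        ∑ k ∈ Finset.range nK, w k * L.delta ((L.WK h).mulVec (XK k)) ((L.WQ h).mulVec q)) •
        ((L.WVO h).mulVec (XK i))

def ffn {d : ℕ} (L : AttnLayer d) (Y : Fin d → ℝ) : Fin d → ℝ :=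
  Y + (L.W2).mulVec (fun a => L.act (((L.W1).mulVec Y + L.b1) a)) + L.b2

lemma attnUpdate_eq {d : ℕ} (L : AttnLayer d) (nK : ℕ) (w : ℕ → ℝ)
    (XK : ℕ → Fin d → ℝ) (q : Fin d → ℝ) :
    attnUpdate L nK w XK q = ffn L (attnCore L nK w XK q) := rfl

/-! Scale invariance -/

lemma attnCore_smul {d : ℕ} (L : AttnLayer d) (nK : ℕ) {c : ℝ} (hc : c ≠ 0)
    (w : ℕ → ℝ) (XK : ℕ → Fin d → ℝ) (q : Fin d → ℝ) :
    attnCore L nK (fun i => c * w i) XK q = attnCore L nK w XK q := by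
  unfold attnCore
  congr 1
  refine Finset.sum_congr rfl fun h _ => Finset.sum_congr rfl fun i _ => ?_
  congr 1
  rw [mul_assoc]
  have : (∑ k ∈ Finset.range nK,
      c * w k * L.delta ((L.WK h).mulVec (XK k)) ((L.WQ h).mulVec q))
      = c * ∑ k ∈ Finset.range nK,
        w k * L.delta ((L.WK h).mulVec (XK k)) ((L.WQ h).mulVec q) := by
    rw [Finset.mul_sum]
    exact Finset.sum_congr rfl fun k _ => by ring
  rw [this, mul_div_mul_left _ _ hc]

lemma attnUpdate_smul {d : ℕ} (L : AttnLayer d) (nK : ℕ) {c : ℝ} (hc : c ≠ 0)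
    (w : ℕ → ℝ) (XK : ℕ → Fin d → ℝ) (q : Fin d → ℝ) :
    attnUpdate L nK (fun i => c * w i) XK q = attnUpdate L nK w XK q := by
  rw [attnUpdate_eq, attnUpdate_eq, attnCore_smul L nK hc]

lemma applyLayer_smul {d : ℕ} (L : AttnLayer d) (nA nB : ℕ) {c c' : ℝ}
    (hc : c ≠ 0) (hc' : c' ≠ 0) (wA wB : ℕ → ℝ)
    (X : (ℕ → Fin d → ℝ) × (ℕ → Fin d → ℝ)) :
    applyLayer L nA nB (fun i => c * wA i) (fun i => c' * wB i) X
      = applyLayer L nA nB wA wB X := by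
  unfold applyLayer
  cases hS : L.srcA <;> cases hU : L.updatesA <;>
    simp only [hS, hU, if_true, if_false, Bool.false_eq_true, attnUpdate_smul L _ hc,
      attnUpdate_smul L _ hc']

lemma runTF_smul {d : ℕ} (T : MatchingTF d) (nA nB : ℕ) {c c' : ℝ}
    (hc : c ≠ 0) (hc' : c' ≠ 0) (wA wB : ℕ → ℝ)
    (FA FB : ℕ → (Fin 2 → ℝ) × (Fin d → ℝ)) :
    runTF T nA nB (fun i => c * wA i) (fun i => c' * wB i) FA FB
      = runTF T nA nB wA wB FA FB := by
  unfold runTF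
  congr 1
  funext X L
  exact applyLayer_smul L nA nB hc hc' wA wB X

/-! Collapse -/

lemma sum_fiber_count {M : Type*} [AddCommMonoid M] {nAs : ℕ} (nA : ℕ)
    (σ : ℕ → Fin nAs) (g : ℕ → M) :
    ∑ i ∈ Finset.range nA, g (σ i).val
      = ∑ k ∈ Finset.range nAs,
          (((Finset.range nA).filter fun i => (σ i).val = k).card) • g k := by
  rw [← Finset.sum_fiberwise_of_maps_to' (fun i _ => Finset.mem_range.mpr (σ i).isLt) g]
  exact Finset.sum_congr rfl fun k _ => (Finset.sum_const (g k)).symm ▸ rfl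

def cnt {nAs : ℕ} (nA : ℕ) (σ : ℕ → Fin nAs) : ℕ → ℝ :=
  fun k => (((Finset.range nA).filter fun i => (σ i).val = k).card : ℝ)

lemma attnCore_collapse {d : ℕ} (L : AttnLayer d) {nAs : ℕ} (nA : ℕ)
    (σ : ℕ → Fin nAs) (Y : ℕ → Fin d → ℝ) (q : Fin d → ℝ) :
    attnCore L nA (fun _ => (1:ℝ)) (fun i => Y (σ i).val) q
      = attnCore L nAs (cnt nA σ) Y q := by
  unfold attnCore
  congr 1
  refine Finset.sum_congr rfl fun h _ => ?_
  have hden : (∑ k ∈ Finset.range nA,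
      (1:ℝ) * L.delta ((L.WK h).mulVec (Y (σ k).val)) ((L.WQ h).mulVec q))
      = ∑ k ∈ Finset.range nAs,
        cnt nA σ k * L.delta ((L.WK h).mulVec (Y k)) ((L.WQ h).mulVec q) := by
    simp only [one_mul]
    rw [sum_fiber_count nA σ (fun k => L.delta ((L.WK h).mulVec (Y k)) ((L.WQ h).mulVec q))]
    exact Finset.sum_congr rfl fun k _ => by
      rw [nsmul_eq_mul]; rfl
  rw [hden]
  rw [sum_fiber_count nA σ (fun k =>
    ((1:ℝ) * L.delta ((L.WK h).mulVec (Y k)) ((L.WQ h).mulVec q) /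
      ∑ k' ∈ Finset.range nAs,
        cnt nA σ k' * L.delta ((L.WK h).mulVec (Y k')) ((L.WQ h).mulVec q)) •
      ((L.WVO h).mulVec (Y k)))]
  refine Finset.sum_congr rfl fun k _ => ?_
  rw [← Nat.cast_smul_eq_nsmul ℝ, smul_smul]
  congr 1
  simp only [one_mul, cnt]
  rw [mul_div_assoc]

lemma attnUpdate_collapse {d : ℕ} (L : AttnLayer d) {nAs : ℕ} (nA : ℕ)
    (σ : ℕ → Fin nAs) (Y : ℕ → Fin d → ℝ) (q : Fin d → ℝ) :
    attnUpdate L nA (fun _ => (1:ℝ)) (fun i => Y (σ i).val) q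
      = attnUpdate L nAs (cnt nA σ) Y q := by
  rw [attnUpdate_eq, attnUpdate_eq, attnCore_collapse]


section Collapse
variable {d nAs nBs : ℕ}

def TokRel {d nAs nBs : ℕ} (σ : ℕ → Fin nAs) (τ : ℕ → Fin nBs)
    (X Y : (ℕ → Fin d → ℝ) × (ℕ → Fin d → ℝ)) : Prop :=
  (∀ m, X.1 m = Y.1 (σ m).val) ∧ (∀ m, X.2 m = Y.2 (τ m).val)

lemma applyLayer_collapse (L : AttnLayer d) (nA nB : ℕ)
    (σ : ℕ → Fin nAs) (τ : ℕ → Fin nBs)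
    {X Y : (ℕ → Fin d → ℝ) × (ℕ → Fin d → ℝ)} (h : TokRel σ τ X Y) :
    TokRel σ τ (applyLayer L nA nB (fun _ => (1:ℝ)) (fun _ => (1:ℝ)) X)
      (applyLayer L nAs nBs (cnt nA σ) (cnt nB τ) Y) := by
  obtain ⟨h1, h2⟩ := h
  have hX1 : X.1 = fun i => Y.1 (σ i).val := funext h1
  have hX2 : X.2 = fun i => Y.2 (τ i).val := funext h2
  unfold applyLayer
  cases hS : L.srcA <;> cases hU : L.updatesA <;>
    simp only [hS, hU, if_true, if_false, Bool.false_eq_true, ite_true, ite_false]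
  · exact ⟨h1, fun m => by
      simp only [hX2]; exact attnUpdate_collapse L nB τ Y.2 _⟩
  · exact ⟨fun m => by
      simp only [hX1, hX2]; exact attnUpdate_collapse L nB τ Y.2 _, h2⟩
  · exact ⟨h1, fun m => by
      simp only [hX1, hX2]; exact attnUpdate_collapse L nA σ Y.1 _⟩
  · exact ⟨fun m => by
      simp only [hX1]; exact attnUpdate_collapse L nA σ Y.1 _, h2⟩

lemma foldl_collapse (ls : List (AttnLayer d)) (nA nB : ℕ)
    (σ : ℕ → Fin nAs) (τ : ℕ → Fin nBs)
    {X Y : (ℕ → Fin d → ℝ) × (ℕ → Fin d → ℝ)} (h : TokRel σ τ X Y) :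
    TokRel σ τ (ls.foldl (fun X L => applyLayer L nA nB (fun _ => (1:ℝ)) (fun _ => (1:ℝ)) X) X)
      (ls.foldl (fun X L => applyLayer L nAs nBs (cnt nA σ) (cnt nB τ) X) Y) := by
  induction ls generalizing X Y with
  | nil => exact h
  | cons L ls ih => exact ih (applyLayer_collapse L nA nB σ τ h)

lemma runTF_collapse (T : MatchingTF d) (nA nB : ℕ)
    (σ : ℕ → Fin nAs) (τ : ℕ → Fin nBs)
    (FAstar : Fin nAs → (Fin 2 → ℝ) × (Fin d → ℝ))
    (FBstar : Fin nBs → (Fin 2 → ℝ) × (Fin d → ℝ)) :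
    TokRel σ τ
      (runTF T nA nB (fun _ => (1:ℝ)) (fun _ => (1:ℝ))
        (fun k => FAstar (σ k)) (fun l => FBstar (τ l)))
      (runTF T nAs nBs (cnt nA σ) (cnt nB τ)
        (fun k => if h : k < nAs then FAstar ⟨k, h⟩ else 0)
        (fun l => if h : l < nBs then FBstar ⟨l, h⟩ else 0)) := by
  unfold runTF
  refine foldl_collapse _ nA nB σ τ ⟨fun m => ?_, fun m => ?_⟩
  · simp [(σ m).isLt]
  · simp [(τ m).isLt]

end Collapse

section Continuity
variable {d : ℕ} {E' : Type*} [TopologicalSpace E']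

lemma continuous_mulVec (M : Matrix (Fin d) (Fin d) ℝ) :
    Continuous fun v : Fin d → ℝ => M.mulVec v := by
  refine continuous_pi fun i => ?_
  simp only [Matrix.mulVec, dotProduct]
  exact continuous_finset_sum _ fun j _ => continuous_const.mul (continuous_apply j)

lemma continuous_ffn (L : AttnLayer d) : Continuous (ffn L) := by
  have h1 : Continuous fun Y : Fin d → ℝ =>
      (L.W2).mulVec (fun a => L.act (((L.W1).mulVec Y + L.b1) a)) := by
    refine (continuous_mulVec _).comp (continuous_pi fun a => ?_)
    refine L.act_cont.comp ?_
    simp only [Pi.add_apply]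
    exact ((continuous_apply a).comp (continuous_mulVec L.W1)).add continuous_const
  exact (continuous_id.add h1).add continuous_const

lemma continuousAt_attnCore_comp (L : AttnLayer d) (nK : ℕ)
    (ws : E' → ℕ → ℝ) (XK : E' → ℕ → Fin d → ℝ) (q : E' → Fin d → ℝ) (p : E')
    (hws : ContinuousAt ws p) (hXK : ContinuousAt XK p) (hq : ContinuousAt q p)
    (hden : ∀ h : Fin L.H,
      (∑ k ∈ Finset.range nK,
        ws p k * L.delta ((L.WK h).mulVec (XK p k)) ((L.WQ h).mulVec (q p))) ≠ 0) :
    ContinuousAt (fun w => attnCore L nK (ws w) (XK w) (q w)) p := by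
  have hterm : ∀ (h : Fin L.H) (i : ℕ), ContinuousAt
      (fun w => ws w i * L.delta ((L.WK h).mulVec (XK w i)) ((L.WQ h).mulVec (q w))) p := by
    intro h i
    refine ContinuousAt.mul ((continuous_apply i).continuousAt.comp hws) ?_
    refine L.delta_cont.continuousAt.comp (ContinuousAt.prodMk ?_ ?_)
    · exact (continuous_mulVec _).continuousAt.comp
        ((continuous_apply i).continuousAt.comp hXK)
    · exact (continuous_mulVec _).continuousAt.comp hq
  have hdenc : ∀ h : Fin L.H, ContinuousAt (fun w => ∑ k ∈ Finset.range nK,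
      ws w k * L.delta ((L.WK h).mulVec (XK w k)) ((L.WQ h).mulVec (q w))) p :=
    fun h => tendsto_finset_sum _ fun k _ => hterm h k
  have hsum : ContinuousAt (fun w => ∑ h : Fin L.H, ∑ i ∈ Finset.range nK,
      ((ws w i * L.delta ((L.WK h).mulVec (XK w i)) ((L.WQ h).mulVec (q w))) /
        ∑ k ∈ Finset.range nK,
          ws w k * L.delta ((L.WK h).mulVec (XK w k)) ((L.WQ h).mulVec (q w))) •
        ((L.WVO h).mulVec (XK w i))) p := by
    refine tendsto_finset_sum _ fun h _ => ?_
    refine tendsto_finset_sum _ fun i _ => ?_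
    refine ContinuousAt.smul (ContinuousAt.div (hterm h i) (hdenc h) (hden h)) ?_
    exact (continuous_mulVec _).continuousAt.comp
      ((continuous_apply i).continuousAt.comp hXK)
  unfold attnCore
  exact hq.add hsum

lemma continuousAt_attnUpdate_comp (L : AttnLayer d) (nK : ℕ)
    (ws : E' → ℕ → ℝ) (XK : E' → ℕ → Fin d → ℝ) (q : E' → Fin d → ℝ) (p : E')
    (hws : ContinuousAt ws p) (hXK : ContinuousAt XK p) (hq : ContinuousAt q p)
    (hden : ∀ h : Fin L.H,
      (∑ k ∈ Finset.range nK,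
        ws p k * L.delta ((L.WK h).mulVec (XK p k)) ((L.WQ h).mulVec (q p))) ≠ 0) :
    ContinuousAt (fun w => attnUpdate L nK (ws w) (XK w) (q w)) p := by
  simp only [attnUpdate_eq]
  exact (continuous_ffn L).continuousAt.comp
    (continuousAt_attnCore_comp L nK ws XK q p hws hXK hq hden)

lemma continuousAt_applyLayer_comp (L : AttnLayer d) (nA nB : ℕ)
    (hnA : 0 < nA) (hnB : 0 < nB)
    (wA wB : E' → ℕ → ℝ) (X : E' → (ℕ → Fin d → ℝ) × (ℕ → Fin d → ℝ)) (p : E')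
    (hwA : ContinuousAt wA p) (hwB : ContinuousAt wB p)
    (hposA : ∀ k < nA, 0 < wA p k) (hposB : ∀ l < nB, 0 < wB p l)
    (hX : ContinuousAt X p) :
    ContinuousAt (fun w => applyLayer L nA nB (wA w) (wB w) (X w)) p := by
  have hX1 : ContinuousAt (fun w => (X w).1) p := continuous_fst.continuousAt.comp hX
  have hX2 : ContinuousAt (fun w => (X w).2) p := continuous_snd.continuousAt.comp hX
  have hdenA : ∀ (Z : E' → ℕ → Fin d → ℝ) (u : E' → Fin d → ℝ) (h : Fin L.H),
      (∑ k ∈ Finset.range nA,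
        wA p k * L.delta ((L.WK h).mulVec (Z p k)) ((L.WQ h).mulVec (u p))) ≠ 0 := by
    intro Z u h
    refine ne_of_gt (Finset.sum_pos (fun k hk =>
      mul_pos (hposA k (Finset.mem_range.mp hk)) (L.delta_pos _ _)) ?_)
    exact ⟨0, Finset.mem_range.mpr hnA⟩
  have hdenB : ∀ (Z : E' → ℕ → Fin d → ℝ) (u : E' → Fin d → ℝ) (h : Fin L.H),
      (∑ k ∈ Finset.range nB,
        wB p k * L.delta ((L.WK h).mulVec (Z p k)) ((L.WQ h).mulVec (u p))) ≠ 0 := by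
    intro Z u h
    refine ne_of_gt (Finset.sum_pos (fun k hk =>
      mul_pos (hposB k (Finset.mem_range.mp hk)) (L.delta_pos _ _)) ?_)
    exact ⟨0, Finset.mem_range.mpr hnB⟩
  simp only [applyLayer]
  cases hS : L.srcA <;> cases hU : L.updatesA <;>
    simp only [hS, hU, if_true, if_false, Bool.false_eq_true, ite_true, ite_false]
  · exact ContinuousAt.prodMk hX1 (continuousAt_pi.mpr fun j =>
      continuousAt_attnUpdate_comp L nB wB (fun w => (X w).2)
        (fun w => (X w).2 j) p hwB hX2 ((continuous_apply j).continuousAt.comp hX2)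
        (hdenB (fun w => (X w).2) (fun w => (X w).2 j)))
  · exact ContinuousAt.prodMk (continuousAt_pi.mpr fun j =>
      continuousAt_attnUpdate_comp L nB wB (fun w => (X w).2)
        (fun w => (X w).1 j) p hwB hX2 ((continuous_apply j).continuousAt.comp hX1)
        (hdenB (fun w => (X w).2) (fun w => (X w).1 j))) hX2
  · exact ContinuousAt.prodMk hX1 (continuousAt_pi.mpr fun j =>
      continuousAt_attnUpdate_comp L nA wA (fun w => (X w).1)
        (fun w => (X w).2 j) p hwA hX1 ((continuous_apply j).continuousAt.comp hX2)
        (hdenA (fun w => (X w).1) (fun w => (X w).2 j)))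
  · exact ContinuousAt.prodMk (continuousAt_pi.mpr fun j =>
      continuousAt_attnUpdate_comp L nA wA (fun w => (X w).1)
        (fun w => (X w).1 j) p hwA hX1 ((continuous_apply j).continuousAt.comp hX1)
        (hdenA (fun w => (X w).1) (fun w => (X w).1 j))) hX2

lemma continuousAt_foldl (ls : List (AttnLayer d)) (nA nB : ℕ)
    (hnA : 0 < nA) (hnB : 0 < nB)
    (wA wB : E' → ℕ → ℝ) (p : E')
    (hwA : ContinuousAt wA p) (hwB : ContinuousAt wB p)
    (hposA : ∀ k < nA, 0 < wA p k) (hposB : ∀ l < nB, 0 < wB p l)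
    (X₀ : E' → (ℕ → Fin d → ℝ) × (ℕ → Fin d → ℝ)) (hX : ContinuousAt X₀ p) :
    ContinuousAt
      (fun w => ls.foldl (fun X L => applyLayer L nA nB (wA w) (wB w) X) (X₀ w)) p := by
  induction ls generalizing X₀ with
  | nil => exact hX
  | cons L ls ih =>
    exact ih (fun w => applyLayer L nA nB (wA w) (wB w) (X₀ w))
      (continuousAt_applyLayer_comp L nA nB hnA hnB wA wB X₀ p hwA hwB hposA hposB hX)

lemma continuousAt_runTF_comp (T : MatchingTF d) (nA nB : ℕ)
    (hnA : 0 < nA) (hnB : 0 < nB)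
    (wA wB : E' → ℕ → ℝ) (p : E')
    (hwA : ContinuousAt wA p) (hwB : ContinuousAt wB p)
    (hposA : ∀ k < nA, 0 < wA p k) (hposB : ∀ l < nB, 0 < wB p l)
    (FA FB : ℕ → (Fin 2 → ℝ) × (Fin d → ℝ)) :
    ContinuousAt (fun w => runTF T nA nB (wA w) (wB w) FA FB) p := by
  unfold runTF
  exact continuousAt_foldl T.layers nA nB hnA hnB wA wB p hwA hwB hposA hposB
    (fun _ => _) continuousAt_const

end Continuity


section Prob
open Topology

def extW {ns : ℕ} (v : Fin ns → ℝ) : ℕ → ℝ :=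
  fun k => if h : k < ns then v ⟨k, h⟩ else 0

def avg {ns : ℕ} (n : ℕ) (σ : ℕ → Fin ns) : Fin ns → ℝ :=
  fun a => (∑ i ∈ Finset.range n, if σ i = a then (1:ℝ) else 0) / n

lemma cnt_eq_mul_extW {ns : ℕ} (n : ℕ) (hn : 0 < n) (σ : ℕ → Fin ns) :
    cnt n σ = fun k => (n : ℝ) * extW (avg n σ) k := by
  have hn' : (n : ℝ) ≠ 0 := Nat.cast_ne_zero.mpr hn.ne'
  funext k
  by_cases h : k < ns
  · simp only [extW, avg, dif_pos h]
    rw [mul_comm, div_mul_cancel₀ _ hn']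
    unfold cnt
    rw [Finset.card_filter]
    push_cast
    refine Finset.sum_congr rfl fun x _ => ?_
    by_cases hx : σ x = ⟨k, h⟩
    · rw [if_pos hx, if_pos (by rw [hx])]
    · rw [if_neg hx, if_neg (fun hv => hx (Fin.ext hv))]
  · have h0 : ((Finset.range n).filter fun i => (σ i).val = k) = ∅ := by
      refine Finset.filter_false_of_mem fun x _ => ?_
      exact fun hv => h (hv ▸ (σ x).isLt)
    simp [cnt, extW, h, h0]

def Gdef {d nAs nBs : ℕ} (T : MatchingTF d)
    (FAstar : Fin nAs → (Fin 2 → ℝ) × (Fin d → ℝ))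
    (FBstar : Fin nBs → (Fin 2 → ℝ) × (Fin d → ℝ))
    (w : (Fin nAs → ℝ) × (Fin nBs → ℝ)) : (ℕ → Fin d → ℝ) × (ℕ → Fin d → ℝ) :=
  runTF T nAs nBs (extW w.1) (extW w.2)
    (fun k => if h : k < nAs then FAstar ⟨k, h⟩ else 0)
    (fun l => if h : l < nBs then FBstar ⟨l, h⟩ else 0)

lemma sample_run_eq {d nAs nBs : ℕ} (T : MatchingTF d)
    (FAstar : Fin nAs → (Fin 2 → ℝ) × (Fin d → ℝ))
    (FBstar : Fin nBs → (Fin 2 → ℝ) × (Fin d → ℝ))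
    {n m : ℕ} (hn : 0 < n) (hm : 0 < m) (σ : ℕ → Fin nAs) (τ : ℕ → Fin nBs) :
    TokRel σ τ
      (runTF T n m (fun _ => (1:ℝ)) (fun _ => (1:ℝ))
        (fun k => FAstar (σ k)) (fun l => FBstar (τ l)))
      (Gdef T FAstar FBstar (avg n σ, avg m τ)) := by
  have hrel := runTF_collapse T n m σ τ FAstar FBstar
  have heq : runTF T nAs nBs (cnt n σ) (cnt m τ)
      (fun k => if h : k < nAs then FAstar ⟨k, h⟩ else 0)
      (fun l => if h : l < nBs then FBstar ⟨l, h⟩ else 0)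
      = Gdef T FAstar FBstar (avg n σ, avg m τ) := by
    rw [cnt_eq_mul_extW n hn σ, cnt_eq_mul_extW m hm τ]
    exact runTF_smul T nAs nBs (Nat.cast_ne_zero.mpr hn.ne') (Nat.cast_ne_zero.mpr hm.ne') _ _ _ _
  rw [← heq]
  exact hrel

set_option maxHeartbeats 1000000 in
lemma continuousAt_Gdef {d nAs nBs : ℕ} (hnAs : 0 < nAs) (hnBs : 0 < nBs)
    (T : MatchingTF d)
    (FAstar : Fin nAs → (Fin 2 → ℝ) × (Fin d → ℝ))
    (FBstar : Fin nBs → (Fin 2 → ℝ) × (Fin d → ℝ))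
    (pA : Fin nAs → ℝ) (pB : Fin nBs → ℝ)
    (hpA : ∀ i, 0 < pA i) (hpB : ∀ j, 0 < pB j) :
    ContinuousAt (Gdef T FAstar FBstar) (pA, pB) := by
  have hwA : Continuous (fun w : (Fin nAs → ℝ) × (Fin nBs → ℝ) => extW w.1) := by
    refine continuous_pi fun k => ?_
    unfold extW
    by_cases h : k < nAs
    · simpa only [dif_pos h, Function.comp_def] using
        (continuous_apply (⟨k, h⟩ : Fin nAs)).comp
          (continuous_fst : Continuous fun w : (Fin nAs → ℝ) × (Fin nBs → ℝ) => w.1)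
    · simpa only [dif_neg h] using
        (continuous_const : Continuous fun _ : (Fin nAs → ℝ) × (Fin nBs → ℝ) => (0:ℝ))
  have hwB : Continuous (fun w : (Fin nAs → ℝ) × (Fin nBs → ℝ) => extW w.2) := by
    refine continuous_pi fun k => ?_
    unfold extW
    by_cases h : k < nBs
    · simpa only [dif_pos h, Function.comp_def] using
        (continuous_apply (⟨k, h⟩ : Fin nBs)).comp
          (continuous_snd : Continuous fun w : (Fin nAs → ℝ) × (Fin nBs → ℝ) => w.2)
    · simpa only [dif_neg h] using
        (continuous_const : Continuous fun _ : (Fin nAs → ℝ) × (Fin nBs → ℝ) => (0:ℝ))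
  have hposA : ∀ k < nAs, 0 < (fun w : (Fin nAs → ℝ) × (Fin nBs → ℝ) => extW w.1) (pA, pB) k := by
    intro k hk
    show 0 < extW pA k
    unfold extW
    rw [dif_pos hk]
    exact hpA _
  have hposB : ∀ k < nBs, 0 < (fun w : (Fin nAs → ℝ) × (Fin nBs → ℝ) => extW w.2) (pA, pB) k := by
    intro k hk
    show 0 < extW pB k
    unfold extW
    rw [dif_pos hk]
    exact hpB _
  have h := continuousAt_runTF_comp T nAs nBs hnAs hnBs
    (fun w => extW w.1) (fun w => extW w.2) (pA, pB)
    hwA.continuousAt hwB.continuousAt hposA hposB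
    (fun k => if h : k < nAs then FAstar ⟨k, h⟩ else 0)
    (fun l => if h : l < nBs then FBstar ⟨l, h⟩ else 0)
  exact h

lemma lln_coord {Ω : Type*} [MeasurableSpace Ω] (P : Measure Ω) [IsProbabilityMeasure P]
    {ns : ℕ} (p : Fin ns → ℝ) (hp_nonneg : ∀ i, 0 ≤ p i)
    (ι : ℕ → Ω → Fin ns) (hmeas : ∀ k, Measurable (ι k))
    (hlaw : ∀ k i, P {ω | ι k ω = i} = ENNReal.ofReal (p i))
    (hindep : iIndepFun ι P) (a : Fin ns)
    {δ : ℝ} (hδ : 0 < δ) :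
    Tendsto (fun n => P {ω | δ ≤ dist (avg n (fun k => ι k ω) a) (p a)})
      atTop (𝓝 0) := by
  set X : ℕ → Ω → ℝ := fun k ω => if ι k ω = a then (1:ℝ) else 0 with hX
  have hSmeas : ∀ k, MeasurableSet {ω | ι k ω = a} := fun k =>
    hmeas k (measurableSet_singleton a)
  have hXind : ∀ k, X k = fun ω => Set.indicator {ω' | ι k ω' = a} (fun _ => (1:ℝ)) ω := by
    intro k; funext ω; simp [hX, Set.indicator_apply]
  have hXmeas : ∀ k, Measurable (X k) := by
    intro k; rw [hXind k]; exact measurable_const.indicator (hSmeas k)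
  have hint : Integrable (X 0) P := by
    rw [hXind 0]
    exact (integrable_const (1:ℝ)).indicator (hSmeas 0)
  have hcomp : iIndepFun
      (fun k => (fun x : Fin ns => if x = a then (1:ℝ) else 0) ∘ ι k) P :=
    hindep.comp _ (fun _ => measurable_from_top)
  have hpair : Pairwise (Function.onFun (IndepFun · · P) X) := by
    intro i j hij
    exact hcomp.indepFun hij
  have hmap : ∀ k, Measure.map (ι k) P = Measure.map (ι 0) P := by
    intro k
    refine MeasureTheory.Measure.ext_of_singleton fun b => ?_
    rw [Measure.map_apply (hmeas k) (measurableSet_singleton b),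
      Measure.map_apply (hmeas 0) (measurableSet_singleton b)]
    show P {ω | ι k ω = b} = P {ω | ι 0 ω = b}
    rw [hlaw k b, hlaw 0 b]
  have hident : ∀ k, IdentDistrib (X k) (X 0) P P := by
    intro k
    have hid : IdentDistrib (ι k) (ι 0) P P :=
      ⟨(hmeas k).aemeasurable, (hmeas 0).aemeasurable, hmap k⟩
    exact hid.comp (measurable_from_top (f := fun x : Fin ns => if x = a then (1:ℝ) else 0))
  have hmean : P[X 0] = p a := by
    rw [hXind 0, integral_indicator_const (1:ℝ) (hSmeas 0), smul_eq_mul, mul_one,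
      measureReal_def, hlaw 0 a, ENNReal.toReal_ofReal (hp_nonneg a)]
  have hae := strong_law_ae_real X hint hpair hident
  rw [hmean] at hae
  have hTIM : TendstoInMeasure P (fun n ω => (∑ i ∈ Finset.range n, X i ω) / n) atTop
      (fun _ => p a) := by
    refine tendstoInMeasure_of_tendsto_ae (fun n => ?_) hae
    exact ((Finset.measurable_sum _ fun i _ => hXmeas i).div_const _).aestronglyMeasurable
  exact tendstoInMeasure_iff_dist.mp hTIM δ hδ

end Prob

/-- asymptotic equivalence of a matching Transformer on i.i.d. sampled feature
points and its reweighted version on all feature points.  Samples `k ∈ {1,…,n_A}` are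
modelled as `k ∈ Finset.range n_A` (0-based), with `F_{A,k} = FAstar (ι k)` and
`F_{B,l} = FBstar (κ l)`.  Output feature points keep the input coordinates and replace
descriptors by the final tokens; convergence is stated for the (coordinate, descriptor)
pairs. -/

theorem reweighted_transformer_asymptotic
    {Ω : Type*} [MeasurableSpace Ω] (P : Measure Ω) [IsProbabilityMeasure P]
    (d nAs nBs : ℕ) (hd : 0 < d) (hnAs : 0 < nAs) (hnBs : 0 < nBs)
    (FAstar : Fin nAs → (Fin 2 → ℝ) × (Fin d → ℝ))
    (FBstar : Fin nBs → (Fin 2 → ℝ) × (Fin d → ℝ))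
    (pA : Fin nAs → ℝ) (pB : Fin nBs → ℝ)
    (hpA_pos : ∀ i, 0 < pA i) (hpA_sum : ∑ i, pA i = 1)
    (hpB_pos : ∀ j, 0 < pB j) (hpB_sum : ∑ j, pB j = 1)
    (ι : ℕ → Ω → Fin nAs) (κ : ℕ → Ω → Fin nBs)
    (hι_meas : ∀ k, Measurable (ι k)) (hκ_meas : ∀ l, Measurable (κ l))
    -- each `ι k` has law `pA`, each `κ l` has law `pB`
    (hι_law : ∀ k i, P {ω | ι k ω = i} = ENNReal.ofReal (pA i))
    (hκ_law : ∀ l j, P {ω | κ l ω = j} = ENNReal.ofReal (pB j))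
    -- each sequence is independent, and the two sequences are independent of each other
    (hι_indep : iIndepFun ι P)
    (hκ_indep : iIndepFun κ P)
    (h_cross : IndepFun (fun ω k => ι k ω) (fun ω l => κ l ω) P)
    (T : MatchingTF d) :
    (∀ i : ℕ,
      TendstoInProb P (atTop : Filter (ℕ × ℕ))
        (fun nAB ω =>
          ((FAstar (ι i ω)).1,
            (runTF T nAB.1 nAB.2 (fun _ => (1 : ℝ)) (fun _ => (1 : ℝ))
              (fun k => FAstar (ι k ω)) (fun l => FBstar (κ l ω))).1 i))
        (fun ω =>
          ((FAstar (ι i ω)).1,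
            (runTF T nAs nBs
              (fun k => if h : k < nAs then pA ⟨k, h⟩ else 0)
              (fun l => if h : l < nBs then pB ⟨l, h⟩ else 0)
              (fun k => if h : k < nAs then FAstar ⟨k, h⟩ else 0)
              (fun l => if h : l < nBs then FBstar ⟨l, h⟩ else 0)).1 (ι i ω).val))) ∧
    (∀ j : ℕ,
      TendstoInProb P (atTop : Filter (ℕ × ℕ))
        (fun nAB ω =>
          ((FBstar (κ j ω)).1,
            (runTF T nAB.1 nAB.2 (fun _ => (1 : ℝ)) (fun _ => (1 : ℝ))
              (fun k => FAstar (ι k ω)) (fun l => FBstar (κ l ω))).2 j))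
        (fun ω =>
          ((FBstar (κ j ω)).1,
            (runTF T nAs nBs
              (fun k => if h : k < nAs then pA ⟨k, h⟩ else 0)
              (fun l => if h : l < nBs then pB ⟨l, h⟩ else 0)
              (fun k => if h : k < nAs then FAstar ⟨k, h⟩ else 0)
              (fun l => if h : l < nBs then FBstar ⟨l, h⟩ else 0)).2 (κ j ω).val))) := by
  classical
  have hG := continuousAt_Gdef hnAs hnBs T FAstar FBstar pA pB hpA_pos hpB_pos
  haveI : Nonempty (Fin nAs) := Fin.pos_iff_nonempty.mp hnAs
  haveI : Nonempty (Fin nBs) := Fin.pos_iff_nonempty.mp hnBs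
  have hLLNA : ∀ a : Fin nAs, ∀ δ : ℝ, 0 < δ → Tendsto (fun n : ℕ × ℕ =>
      P {ω | δ ≤ dist (avg n.1 (fun k => ι k ω) a) (pA a)}) atTop (nhds 0) := by
    intro a δ hδ
    have h := lln_coord P pA (fun x => (hpA_pos x).le) ι hι_meas hι_law hι_indep a hδ
    rw [← prod_atTop_atTop_eq]
    exact h.comp tendsto_fst
  have hLLNB : ∀ b : Fin nBs, ∀ δ : ℝ, 0 < δ → Tendsto (fun n : ℕ × ℕ =>
      P {ω | δ ≤ dist (avg n.2 (fun l => κ l ω) b) (pB b)}) atTop (nhds 0) := by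
    intro b δ hδ
    have h := lln_coord P pB (fun x => (hpB_pos x).le) κ hκ_meas hκ_law hκ_indep b hδ
    rw [← prod_atTop_atTop_eq]
    exact h.comp tendsto_snd
  constructor
  · -- Part A
    intro i ε hε
    have hga : ∀ a : Fin nAs, ∃ δ > 0, ∀ w : (Fin nAs → ℝ) × (Fin nBs → ℝ),
        dist w (pA, pB) < δ → dist ((Gdef T FAstar FBstar w).1 a.val)
          ((Gdef T FAstar FBstar (pA, pB)).1 a.val) < ε := by
      intro a
      have hca : ContinuousAt (fun w => (Gdef T FAstar FBstar w).1 a.val) (pA, pB) :=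
        (continuous_apply (a.val)).continuousAt.comp (continuous_fst.continuousAt.comp hG)
      obtain ⟨δ, hδ, hb⟩ := Metric.continuousAt_iff.mp hca ε hε
      exact ⟨δ, hδ, fun w hw => hb hw⟩
    choose δf hδf hb using hga
    have hne : (Finset.univ : Finset (Fin nAs)).Nonempty := Finset.univ_nonempty
    set δ := Finset.univ.inf' hne δf with hδdef
    have hδpos : 0 < δ := (Finset.lt_inf'_iff hne).mpr fun a _ => hδf a
    have hδle : ∀ a, δ ≤ δf a := fun a => Finset.inf'_le _ (Finset.mem_univ a)
    have hsub : ∀ n : ℕ × ℕ, 1 ≤ n.1 → 1 ≤ n.2 →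
        {ω | ε < dist
          (((FAstar (ι i ω)).1, (runTF T n.1 n.2 (fun _ => (1:ℝ)) (fun _ => (1:ℝ))
            (fun k => FAstar (ι k ω)) (fun l => FBstar (κ l ω))).1 i))
          (((FAstar (ι i ω)).1, (runTF T nAs nBs
            (fun k => if h : k < nAs then pA ⟨k, h⟩ else 0)
            (fun l => if h : l < nBs then pB ⟨l, h⟩ else 0)
            (fun k => if h : k < nAs then FAstar ⟨k, h⟩ else 0)
            (fun l => if h : l < nBs then FBstar ⟨l, h⟩ else 0)).1 (ι i ω).val))} ⊆
        (⋃ a : Fin nAs, {ω | δ ≤ dist (avg n.1 (fun k => ι k ω) a) (pA a)}) ∪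
        (⋃ b : Fin nBs, {ω | δ ≤ dist (avg n.2 (fun l => κ l ω) b) (pB b)}) := by
      intro n h1 h2 ω hω
      by_contra hcon
      simp only [Set.mem_union, Set.mem_iUnion, Set.mem_setOf_eq, not_or, not_exists,
        not_le] at hcon
      obtain ⟨hcA, hcB⟩ := hcon
      have hdistw : dist ((avg n.1 (fun k => ι k ω), avg n.2 (fun l => κ l ω)) :
          (Fin nAs → ℝ) × (Fin nBs → ℝ)) (pA, pB) < δ := by
        rw [Prod.dist_eq]
        exact max_lt ((dist_pi_lt_iff hδpos).mpr fun a => hcA a)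
          ((dist_pi_lt_iff hδpos).mpr fun b => hcB b)
      have hrun := (sample_run_eq T FAstar FBstar (Nat.lt_of_lt_of_le Nat.zero_lt_one h1)
        (Nat.lt_of_lt_of_le Nat.zero_lt_one h2) (fun k => ι k ω) (fun l => κ l ω)).1 i
      have hωd : ε < dist
          ((runTF T n.1 n.2 (fun _ => (1:ℝ)) (fun _ => (1:ℝ))
            (fun k => FAstar (ι k ω)) (fun l => FBstar (κ l ω))).1 i)
          ((Gdef T FAstar FBstar (pA, pB)).1 (ι i ω).val) := by
        have hd : ∀ x y : Fin d → ℝ, ∀ c : Fin 2 → ℝ,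
            dist ((c, x) : (Fin 2 → ℝ) × (Fin d → ℝ)) (c, y) = dist x y := by
          intro x y c
          rw [Prod.dist_eq]
          simp [dist_self, max_eq_right dist_nonneg]
        have hmem : ε < _ := hω
        rwa [hd] at hmem
      rw [hrun] at hωd
      have hlt := hb (ι i ω) _ (hdistw.trans_le (hδle (ι i ω)))
      exact lt_asymm hωd hlt
    have hU : Tendsto (fun n : ℕ × ℕ =>
        (∑ a : Fin nAs, P {ω | δ ≤ dist (avg n.1 (fun k => ι k ω) a) (pA a)}) +
        ∑ b : Fin nBs, P {ω | δ ≤ dist (avg n.2 (fun l => κ l ω) b) (pB b)})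
        atTop (nhds 0) := by
      have h1 := tendsto_finset_sum (Finset.univ : Finset (Fin nAs))
        (fun a _ => hLLNA a δ hδpos)
      have h2 := tendsto_finset_sum (Finset.univ : Finset (Fin nBs))
        (fun b _ => hLLNB b δ hδpos)
      simpa using h1.add h2
    refine tendsto_of_tendsto_of_tendsto_of_le_of_le' tendsto_const_nhds hU
      (Eventually.of_forall fun n => zero_le) ?_
    refine eventually_atTop.mpr ⟨(1, 1), fun n hn => ?_⟩
    refine (measure_mono (hsub n hn.1 hn.2)).trans ?_
    refine (measure_union_le _ _).trans ?_
    exact add_le_add (measure_iUnion_fintype_le _ _) (measure_iUnion_fintype_le _ _)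
  · -- Part B
    intro j ε hε
    have hga : ∀ b : Fin nBs, ∃ δ > 0, ∀ w : (Fin nAs → ℝ) × (Fin nBs → ℝ),
        dist w (pA, pB) < δ → dist ((Gdef T FAstar FBstar w).2 b.val)
          ((Gdef T FAstar FBstar (pA, pB)).2 b.val) < ε := by
      intro b
      have hca : ContinuousAt (fun w => (Gdef T FAstar FBstar w).2 b.val) (pA, pB) :=
        (continuous_apply (b.val)).continuousAt.comp (continuous_snd.continuousAt.comp hG)
      obtain ⟨δ, hδ, hbb⟩ := Metric.continuousAt_iff.mp hca ε hε
      exact ⟨δ, hδ, fun w hw => hbb hw⟩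
    choose δf hδf hb using hga
    have hne : (Finset.univ : Finset (Fin nBs)).Nonempty := Finset.univ_nonempty
    set δ := Finset.univ.inf' hne δf with hδdef
    have hδpos : 0 < δ := (Finset.lt_inf'_iff hne).mpr fun b _ => hδf b
    have hδle : ∀ b, δ ≤ δf b := fun b => Finset.inf'_le _ (Finset.mem_univ b)
    have hsub : ∀ n : ℕ × ℕ, 1 ≤ n.1 → 1 ≤ n.2 →
        {ω | ε < dist
          (((FBstar (κ j ω)).1, (runTF T n.1 n.2 (fun _ => (1:ℝ)) (fun _ => (1:ℝ))
            (fun k => FAstar (ι k ω)) (fun l => FBstar (κ l ω))).2 j))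
          (((FBstar (κ j ω)).1, (runTF T nAs nBs
            (fun k => if h : k < nAs then pA ⟨k, h⟩ else 0)
            (fun l => if h : l < nBs then pB ⟨l, h⟩ else 0)
            (fun k => if h : k < nAs then FAstar ⟨k, h⟩ else 0)
            (fun l => if h : l < nBs then FBstar ⟨l, h⟩ else 0)).2 (κ j ω).val))} ⊆
        (⋃ a : Fin nAs, {ω | δ ≤ dist (avg n.1 (fun k => ι k ω) a) (pA a)}) ∪
        (⋃ b : Fin nBs, {ω | δ ≤ dist (avg n.2 (fun l => κ l ω) b) (pB b)}) := by
      intro n h1 h2 ω hω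
      by_contra hcon
      simp only [Set.mem_union, Set.mem_iUnion, Set.mem_setOf_eq, not_or, not_exists,
        not_le] at hcon
      obtain ⟨hcA, hcB⟩ := hcon
      have hdistw : dist ((avg n.1 (fun k => ι k ω), avg n.2 (fun l => κ l ω)) :
          (Fin nAs → ℝ) × (Fin nBs → ℝ)) (pA, pB) < δ := by
        rw [Prod.dist_eq]
        exact max_lt ((dist_pi_lt_iff hδpos).mpr fun a => hcA a)
          ((dist_pi_lt_iff hδpos).mpr fun b => hcB b)
      have hrun := (sample_run_eq T FAstar FBstar (Nat.lt_of_lt_of_le Nat.zero_lt_one h1)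
        (Nat.lt_of_lt_of_le Nat.zero_lt_one h2) (fun k => ι k ω) (fun l => κ l ω)).2 j
      have hωd : ε < dist
          ((runTF T n.1 n.2 (fun _ => (1:ℝ)) (fun _ => (1:ℝ))
            (fun k => FAstar (ι k ω)) (fun l => FBstar (κ l ω))).2 j)
          ((Gdef T FAstar FBstar (pA, pB)).2 (κ j ω).val) := by
        have hd : ∀ x y : Fin d → ℝ, ∀ c : Fin 2 → ℝ,
            dist ((c, x) : (Fin 2 → ℝ) × (Fin d → ℝ)) (c, y) = dist x y := by
          intro x y c
          rw [Prod.dist_eq]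
          simp [dist_self, max_eq_right dist_nonneg]
        have hmem : ε < _ := hω
        rwa [hd] at hmem
      rw [hrun] at hωd
      have hlt := hb (κ j ω) _ (hdistw.trans_le (hδle (κ j ω)))
      exact lt_asymm hωd hlt
    have hU : Tendsto (fun n : ℕ × ℕ =>
        (∑ a : Fin nAs, P {ω | δ ≤ dist (avg n.1 (fun k => ι k ω) a) (pA a)}) +
        ∑ b : Fin nBs, P {ω | δ ≤ dist (avg n.2 (fun l => κ l ω) b) (pB b)})
        atTop (nhds 0) := by
      have h1 := tendsto_finset_sum (Finset.univ : Finset (Fin nAs))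
        (fun a _ => hLLNA a δ hδpos)
      have h2 := tendsto_finset_sum (Finset.univ : Finset (Fin nBs))
        (fun b _ => hLLNB b δ hδpos)
      simpa using h1.add h2
    refine tendsto_of_tendsto_of_tendsto_of_le_of_le' tendsto_const_nhds hU
      (Eventually.of_forall fun n => zero_le) ?_
    refine eventually_atTop.mpr ⟨(1, 1), fun n hn => ?_⟩
    refine (measure_mono (hsub n hn.1 hn.2)).trans ?_
    refine (measure_union_le _ _).trans ?_
    exact add_le_add (measure_iUnion_fintype_le _ _) (measure_iUnion_fintype_le _ _)

end
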